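/- Let P ∈ ℝ^{n×n} be a nonnegative matrix with all row sums ≤ γ where 0 < γ < 1, T U = P U + r, and U* the unique fixed point of T. With β_k = 1/(∑_{i=0}^k γ^{-2i}) and U^k = β_k U^0 + (1-β_k) T U^{k-1}, one has ‖T U^k - U^k‖_∞ ≤ ((γ⁻¹ - γ)(1 + 2γ - γ^(k+1)))/((γ^(k+1))⁻¹ - γ^(k+1)) · ‖U^0 - U*‖_∞ for all k ≥ 0. -/

import Mathlib

theorem stmt_8 (n : ℕ) (hn : 0 < n) (γ : ℝ) (hγ0 : 0 < γ) (hγ1 : γ < 1)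
    (P : Matrix (Fin n) (Fin n) ℝ)
    (hPnonneg : ∀ i j, 0 ≤ P i j)
    (hProw : ∀ i, ∑ j, P i j ≤ γ)
    (r : Fin n → ℝ)
    (T : (Fin n → ℝ) → (Fin n → ℝ))
    (hTdef : ∀ U, T U = P.mulVec U + r)
    (Ustar : Fin n → ℝ) (hfix : T Ustar = Ustar)
    (β : ℕ → ℝ) (hβ : ∀ k, β k = (∑ i ∈ Finset.range (k+1), (γ^(2*i))⁻¹)⁻¹)
    (U : ℕ → Fin n → ℝ)
    (hU : ∀ k : ℕ, U (k+1) = β (k+1) • U 0 + (1 - β (k+1)) • T (U k)) :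
    ∀ k : ℕ,
      ‖T (U k) - U k‖
        ≤ ((γ⁻¹ - γ) * (1 + 2*γ - γ^(k+1))) / ((γ^(k+1))⁻¹ - γ^(k+1))
            * ‖U 0 - Ustar‖ := by
  have hγne : γ ≠ 0 := ne_of_gt hγ0
  -- contraction property
  have hPv : ∀ v : Fin n → ℝ, ‖P.mulVec v‖ ≤ γ * ‖v‖ := by
    intro v
    refine (pi_norm_le_iff_of_nonneg (mul_nonneg hγ0.le (norm_nonneg _))).mpr ?_
    intro i
    calc ‖P.mulVec v i‖ = |∑ j, P i j * v j| := by
          simp [Matrix.mulVec, dotProduct, Real.norm_eq_abs]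
      _ ≤ ∑ j, |P i j * v j| := Finset.abs_sum_le_sum_abs _ _
      _ = ∑ j, P i j * |v j| := by
          refine Finset.sum_congr rfl fun j _ => ?_
          rw [abs_mul, abs_of_nonneg (hPnonneg i j)]
      _ ≤ ∑ j, P i j * ‖v‖ := by
          refine Finset.sum_le_sum fun j _ => ?_
          exact mul_le_mul_of_nonneg_left (norm_le_pi_norm v j) (hPnonneg i j)
      _ = (∑ j, P i j) * ‖v‖ := (Finset.sum_mul _ _ _).symm
      _ ≤ γ * ‖v‖ := mul_le_mul_of_nonneg_right (hProw i) (norm_nonneg _)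
  have hPpow : ∀ (i : ℕ) (v : Fin n → ℝ), ‖(P^i).mulVec v‖ ≤ γ^i * ‖v‖ := by
    intro i
    induction i with
    | zero => intro v; simp [Matrix.one_mulVec]
    | succ i ih =>
      intro v
      rw [pow_succ, ← Matrix.mulVec_mulVec]
      calc ‖(P^i).mulVec (P.mulVec v)‖ ≤ γ^i * ‖P.mulVec v‖ := ih _
        _ ≤ γ^i * (γ * ‖v‖) :=
            mul_le_mul_of_nonneg_left (hPv v) (pow_nonneg hγ0.le i)
        _ = γ^(i+1) * ‖v‖ := by ring
  set d : Fin n → ℝ := U 0 - Ustar with hd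
  set e : ℕ → Fin n → ℝ := fun k => T (U k) - U k with he
  have hr : r = Ustar - P.mulVec Ustar := by
    have h := hfix
    rw [hTdef] at h
    rw [eq_sub_iff_add_eq, add_comm]; exact h
  have he0 : e 0 = P.mulVec d - d := by
    simp only [he, hd, hTdef, Matrix.mulVec_sub, hr]
    abel
  have hrec : ∀ k, e (k+1) = β (k+1) • e 0 + (1 - β (k+1)) • P.mulVec (e k) := by
    intro k
    simp only [he, hTdef, hU k, Matrix.mulVec_add, Matrix.mulVec_smul, Matrix.mulVec_sub]
    module
  have hSpos : ∀ k : ℕ, (0:ℝ) < ∑ i ∈ Finset.range (k+1), (γ^(2*i))⁻¹ := by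
    intro k
    refine Finset.sum_pos (fun i _ => by positivity) ⟨0, Finset.mem_range.mpr (Nat.succ_pos k)⟩
  have hshift : ∀ i : ℕ, (γ^(2*(i+1)))⁻¹ = (γ^2)⁻¹ * (γ^(2*i))⁻¹ := by
    intro i
    rw [show 2*(i+1) = 2 + 2*i by ring, pow_add, mul_inv]
  have hkey : ∀ k, (∑ i ∈ Finset.range (k+1), (γ^(2*i))⁻¹) • e k
      = ∑ i ∈ Finset.range (k+1), (γ^(2*i))⁻¹ • (P^i).mulVec (e 0) := by
    intro k
    induction k with
    | zero => simp [Matrix.one_mulVec]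
    | succ k ih =>
      rw [hrec k, smul_add, smul_smul, smul_smul, hβ (k+1)]
      have h1 : (∑ i ∈ Finset.range (k+1+1), (γ^(2*i))⁻¹)
          * (∑ i ∈ Finset.range (k+1+1), (γ^(2*i))⁻¹)⁻¹ = 1 :=
        mul_inv_cancel₀ (hSpos (k+1)).ne'
      have h2 : (∑ i ∈ Finset.range (k+1+1), (γ^(2*i))⁻¹)
          * (1 - (∑ i ∈ Finset.range (k+1+1), (γ^(2*i))⁻¹)⁻¹)
          = (γ^2)⁻¹ * ∑ i ∈ Finset.range (k+1), (γ^(2*i))⁻¹ := by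
        rw [mul_sub, h1, mul_one]
        rw [Finset.sum_range_succ' (fun i => (γ^(2*i))⁻¹) (k+1)]
        simp only [hshift]
        rw [← Finset.mul_sum]
        norm_num
      rw [h1, h2, one_smul, mul_smul]
      rw [← Matrix.mulVec_smul, ih]
      have h3 : P.mulVec (∑ i ∈ Finset.range (k+1), (γ^(2*i))⁻¹ • (P^i).mulVec (e 0))
          = ∑ i ∈ Finset.range (k+1), (γ^(2*i))⁻¹ • (P^(i+1)).mulVec (e 0) := by
        rw [show P.mulVec = (P.mulVecLin : (Fin n → ℝ) →ₗ[ℝ] (Fin n → ℝ)) from rfl]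
        rw [map_sum]
        refine Finset.sum_congr rfl fun i _ => ?_
        rw [map_smul]
        congr 1
        simp only [Matrix.mulVecLin_apply]
        rw [Matrix.mulVec_mulVec, ← pow_succ']
      rw [h3, Finset.smul_sum]
      rw [Finset.sum_range_succ' (fun i => (γ^(2*i))⁻¹ • (P^i).mulVec (e 0)) (k+1)]
      simp only [hshift, mul_smul]
      simp [pow_zero, Matrix.one_mulVec]
      abel
  have hrep : ∀ k, (∑ i ∈ Finset.range (k+1), (γ^(2*i))⁻¹ • (P^i).mulVec (e 0))
      = ((γ^(2*k))⁻¹ • (P^(k+1)).mulVec d - d)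
        + ∑ i ∈ Finset.range k, ((γ^2 - 1) * (γ^(2*(i+1)))⁻¹) • (P^(i+1)).mulVec d := by
    intro k
    induction k with
    | zero => simp [he0, Matrix.mulVec_sub]
    | succ k ih =>
      rw [Finset.sum_range_succ (fun i => (γ^(2*i))⁻¹ • (P^i).mulVec (e 0)) (k+1), ih,
        Finset.sum_range_succ (fun i => ((γ^2 - 1) * (γ^(2*(i+1)))⁻¹) • (P^(i+1)).mulVec d) k]
      have hPe : (P^(k+1)).mulVec (e 0) = (P^(k+2)).mulVec d - (P^(k+1)).mulVec d := by
        rw [he0, Matrix.mulVec_sub, Matrix.mulVec_mulVec, ← pow_succ]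
      rw [hPe]
      have hcoeff : (γ^2 - 1) * (γ^(2*(k+1)))⁻¹ = (γ^(2*k))⁻¹ - (γ^(2*(k+1)))⁻¹ := by
        rw [hshift k]
        field_simp
      rw [hcoeff]
      module
  intro k
  have hxpos : (0:ℝ) < γ^k := pow_pos hγ0 k
  have hxne : (γ:ℝ)^k ≠ 0 := hxpos.ne'
  have hinv1 : 1 < γ⁻¹ := one_lt_inv₀ hγ0 |>.mpr hγ1
  have hinvne : γ⁻¹ ≠ 1 := ne_of_gt hinv1
  have hg2 : γ^2 < 1 := by nlinarith
  have hgeom : ∑ i ∈ Finset.range k, (γ⁻¹)^(i+1) = (((γ⁻¹)^k - 1)/(γ⁻¹-1)) * γ⁻¹ := by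
    simp only [pow_succ]
    rw [← Finset.sum_mul, geom_sum_eq hinvne]
  have hVk : ‖(∑ i ∈ Finset.range (k+1), (γ^(2*i))⁻¹) • e k‖
      ≤ ((1+2*γ) * (γ^k)⁻¹ - γ) * ‖d‖ := by
    rw [hkey k, hrep k]
    have hXbound : ‖(γ^(2*k))⁻¹ • (P^(k+1)).mulVec d‖ ≤ γ * (γ^k)⁻¹ * ‖d‖ := by
      rw [norm_smul, Real.norm_eq_abs, abs_of_pos (by positivity)]
      calc (γ^(2*k))⁻¹ * ‖(P^(k+1)).mulVec d‖ ≤ (γ^(2*k))⁻¹ * (γ^(k+1) * ‖d‖) := by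
            exact mul_le_mul_of_nonneg_left (hPpow (k+1) d) (by positivity)
        _ = γ * (γ^k)⁻¹ * ‖d‖ := by
            rw [two_mul, pow_add, pow_succ]
            field_simp
    have hterm : ∀ i ∈ Finset.range k,
        ‖((γ^2 - 1) * (γ^(2*(i+1)))⁻¹) • (P^(i+1)).mulVec d‖
          ≤ (1-γ^2) * (γ⁻¹)^(i+1) * ‖d‖ := by
      intro i _
      have hne1 : (γ:ℝ)^(i+1) ≠ 0 := pow_ne_zero _ hγne
      have hc : (γ^(2*(i+1)))⁻¹ * γ^(i+1) = (γ⁻¹)^(i+1) := by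
        rw [show 2*(i+1) = (i+1)+(i+1) by ring, pow_add, mul_inv, inv_pow]
        field_simp
      rw [norm_smul, Real.norm_eq_abs, abs_mul,
        abs_of_nonpos (by nlinarith : γ^2 - 1 ≤ 0), abs_of_pos (by positivity), neg_sub]
      calc (1-γ^2) * (γ^(2*(i+1)))⁻¹ * ‖(P^(i+1)).mulVec d‖
          ≤ (1-γ^2) * (γ^(2*(i+1)))⁻¹ * (γ^(i+1) * ‖d‖) := by
            refine mul_le_mul_of_nonneg_left (hPpow (i+1) d) ?_
            have : (0:ℝ) < (γ^(2*(i+1)))⁻¹ := by positivity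
            nlinarith
        _ = (1-γ^2) * (γ⁻¹)^(i+1) * ‖d‖ := by rw [← hc]; ring
    have hSbound : ‖∑ i ∈ Finset.range k, ((γ^2 - 1) * (γ^(2*(i+1)))⁻¹) • (P^(i+1)).mulVec d‖
        ≤ (1-γ^2) * ((((γ⁻¹)^k - 1)/(γ⁻¹-1)) * γ⁻¹) * ‖d‖ := by
      calc ‖∑ i ∈ Finset.range k, ((γ^2 - 1) * (γ^(2*(i+1)))⁻¹) • (P^(i+1)).mulVec d‖
          ≤ ∑ i ∈ Finset.range k, ‖((γ^2 - 1) * (γ^(2*(i+1)))⁻¹) • (P^(i+1)).mulVec d‖ :=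
            norm_sum_le _ _
        _ ≤ ∑ i ∈ Finset.range k, (1-γ^2) * (γ⁻¹)^(i+1) * ‖d‖ :=
            Finset.sum_le_sum hterm
        _ = (1-γ^2) * (∑ i ∈ Finset.range k, (γ⁻¹)^(i+1)) * ‖d‖ := by
            rw [Finset.mul_sum, Finset.sum_mul]
        _ = (1-γ^2) * ((((γ⁻¹)^k - 1)/(γ⁻¹-1)) * γ⁻¹) * ‖d‖ := by rw [hgeom]
    have harith : ∀ x : ℝ, x ≠ 0 → γ*x⁻¹ + 1 + (1-γ^2)*(((x⁻¹ - 1)/(γ⁻¹-1)) * γ⁻¹)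
        = (1+2*γ)*x⁻¹ - γ := by
      intro x hx
      have h1 : γ⁻¹ - 1 ≠ 0 := sub_ne_zero.mpr hinvne
      have h2 : γ*x - γ^2*x ≠ 0 := by
        have hh : γ*x - γ^2*x = γ*x*(1-γ) := by ring
        rw [hh]
        exact mul_ne_zero (mul_ne_zero hγne hx) (by linarith : (0:ℝ) < 1-γ).ne'
      have h3 : (1:ℝ) - γ ≠ 0 := (by linarith : (0:ℝ) < 1-γ).ne'
      field_simp [h2]
      ring
    calc ‖((γ^(2*k))⁻¹ • (P^(k+1)).mulVec d - d)
          + ∑ i ∈ Finset.range k, ((γ^2 - 1) * (γ^(2*(i+1)))⁻¹) • (P^(i+1)).mulVec d‖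
        ≤ ‖(γ^(2*k))⁻¹ • (P^(k+1)).mulVec d - d‖
          + ‖∑ i ∈ Finset.range k, ((γ^2 - 1) * (γ^(2*(i+1)))⁻¹) • (P^(i+1)).mulVec d‖ :=
          norm_add_le _ _
      _ ≤ (‖(γ^(2*k))⁻¹ • (P^(k+1)).mulVec d‖ + ‖d‖)
          + ‖∑ i ∈ Finset.range k, ((γ^2 - 1) * (γ^(2*(i+1)))⁻¹) • (P^(i+1)).mulVec d‖ := by
          gcongr
          exact norm_sub_le _ _
      _ ≤ (γ * (γ^k)⁻¹ * ‖d‖ + ‖d‖)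
          + (1-γ^2) * ((((γ⁻¹)^k - 1)/(γ⁻¹-1)) * γ⁻¹) * ‖d‖ :=
          add_le_add (add_le_add hXbound le_rfl) hSbound
      _ = (γ*(γ^k)⁻¹ + 1 + (1-γ^2)*((((γ^k)⁻¹ - 1)/(γ⁻¹-1)) * γ⁻¹)) * ‖d‖ := by
          rw [inv_pow]; ring
      _ = ((1+2*γ) * (γ^k)⁻¹ - γ) * ‖d‖ := by rw [harith (γ^k) hxne]
  -- final assembly
  have hS := hSpos k
  have hnorm : ‖(∑ i ∈ Finset.range (k+1), (γ^(2*i))⁻¹) • e k‖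
      = (∑ i ∈ Finset.range (k+1), (γ^(2*i))⁻¹) * ‖e k‖ := by
    rw [norm_smul, Real.norm_eq_abs, abs_of_pos hS]
  rw [hnorm] at hVk
  have hek : ‖e k‖ ≤ (((1+2*γ) * (γ^k)⁻¹ - γ) / (∑ i ∈ Finset.range (k+1), (γ^(2*i))⁻¹)) * ‖d‖ := by
    rw [div_mul_eq_mul_div, le_div_iff₀ hS, mul_comm]
    exact hVk
  have hyne : (γ:ℝ)^(k+1) ≠ 0 := pow_ne_zero _ hγne
  have hy1 : γ^(k+1) < 1 := pow_lt_one₀ hγ0.le hγ1 (Nat.succ_ne_zero k)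
  have hypos : (0:ℝ) < γ^(k+1) := pow_pos hγ0 (k+1)
  have hd3 : (γ^2)⁻¹ - 1 ≠ 0 := by
    have : 1 < (γ^2)⁻¹ := (one_lt_inv₀ (by positivity)).mpr hg2
    linarith
  have hSgeom : (∑ i ∈ Finset.range (k+1), (γ^(2*i))⁻¹)
      = (((γ^(k+1))^2)⁻¹ - 1)/((γ^2)⁻¹ - 1) := by
    have hne2 : (γ^2)⁻¹ ≠ 1 := by
      have : 1 < (γ^2)⁻¹ := (one_lt_inv₀ (by positivity)).mpr hg2
      exact ne_of_gt this
    have e1 : ((γ^2)⁻¹)^(k+1) = ((γ^(k+1))^2)⁻¹ := by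
      rw [inv_pow, ← pow_mul, ← pow_mul, Nat.mul_comm]
    rw [← e1, ← geom_sum_eq hne2 (k+1)]
    refine Finset.sum_congr rfl fun i _ => ?_
    rw [inv_pow, ← pow_mul]
  have hBne : (γ^(k+1))⁻¹ - γ^(k+1) ≠ 0 := by
    have : 1 < (γ^(k+1))⁻¹ := (one_lt_inv₀ hypos).mpr hy1
    have : 0 < (γ^(k+1))⁻¹ - γ^(k+1) := by linarith
    exact ne_of_gt this
  have hSne' : (((γ^(k+1))^2)⁻¹ - 1)/((γ^2)⁻¹ - 1) ≠ 0 := by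
    rw [← hSgeom]; exact hS.ne'
  have hCoeff : (((1+2*γ) * (γ^k)⁻¹ - γ) / (∑ i ∈ Finset.range (k+1), (γ^(2*i))⁻¹))
      = ((γ⁻¹ - γ) * (1 + 2*γ - γ^(k+1))) / ((γ^(k+1))⁻¹ - γ^(k+1)) := by
    rw [hSgeom, div_eq_div_iff hSne' hBne]
    have hgk : ((γ:ℝ)^k)⁻¹ = γ * (γ^(k+1))⁻¹ := by
      rw [pow_succ, mul_inv]
      field_simp
    rw [hgk, ← mul_div_assoc, eq_div_iff hd3]
    field_simp
  calc ‖e k‖ ≤ (((1+2*γ) * (γ^k)⁻¹ - γ) / (∑ i ∈ Finset.range (k+1), (γ^(2*i))⁻¹)) * ‖d‖ := hek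
    _ = ((γ⁻¹ - γ) * (1 + 2*γ - γ^(k+1))) / ((γ^(k+1))⁻¹ - γ^(k+1)) * ‖d‖ := by rw [hCoeff]
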